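/- For finite m < n, if there is an injection from A ⊕ (Fin m × C) to B ⊕ (Fin n × C), then there is an injection from A to B ⊕ (Fin (n−m) × C). -/
import Mathlib

universe u v w

lemma stmt_8_aux {a b c : Cardinal} (m n : ℕ) (hmn : m < n)
    (h : a + m * c ≤ b + n * c) : a ≤ b + (n - m : ℕ) * c := by
  have hn : (n : Cardinal) = (m : Cardinal) + ((n - m : ℕ) : Cardinal) := by
    rw [← Nat.cast_add, Nat.cast_inj]; omega
  rcases lt_or_ge c Cardinal.aleph0 with hC | hC
  · have hfin : (m : Cardinal) * c < Cardinal.aleph0 :=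
      Cardinal.mul_lt_aleph0 (Cardinal.nat_lt_aleph0 m) hC
    rw [← Cardinal.add_le_add_iff_of_lt_aleph0 hfin]
    calc a + (m : Cardinal) * c ≤ b + n * c := h
      _ = b + ((n - m : ℕ) : Cardinal) * c + (m : Cardinal) * c := by
          rw [hn, add_mul]; ring
  · have h1 : (n : Cardinal) * c = c :=
      Cardinal.mul_eq_right hC ((Cardinal.nat_lt_aleph0 n).le.trans hC)
        (by exact_mod_cast (Nat.zero_lt_of_lt hmn).ne')
    have h2 : ((n - m : ℕ) : Cardinal) * c = c :=
      Cardinal.mul_eq_right hC ((Cardinal.nat_lt_aleph0 _).le.trans hC)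
        (by exact_mod_cast (Nat.sub_pos_of_lt hmn).ne')
    calc a ≤ a + (m : Cardinal) * c := le_self_add
      _ ≤ b + n * c := h
      _ = b + ((n - m : ℕ) : Cardinal) * c := by rw [h1, h2]

theorem stmt_8_helper (m n : ℕ) (hmn : m < n) (A : Type u) (B : Type v) (C : Type w)
    (f : A ⊕ (Fin m × C) → B ⊕ (Fin n × C)) (hf : Function.Injective f) :
    ∃ g : A → B ⊕ (Fin (n - m) × C), Function.Injective g := by
  have h := Cardinal.lift_mk_le'.mpr ⟨⟨f, hf⟩⟩
  simp only [Cardinal.mk_sum, Cardinal.lift_add, Cardinal.lift_lift, Cardinal.mk_prod,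
    Cardinal.lift_mul, Cardinal.mk_fintype, Fintype.card_fin, Cardinal.lift_natCast] at h
  rw [Cardinal.lift_umax.{w, max u v}] at h
  suffices hkey : Nonempty (A ↪ B ⊕ (Fin (n - m) × C)) by
    obtain ⟨g⟩ := hkey; exact ⟨g, g.injective⟩
  rw [← Cardinal.lift_mk_le']
  simp only [Cardinal.mk_sum, Cardinal.lift_add, Cardinal.lift_lift, Cardinal.mk_prod,
    Cardinal.lift_mul, Cardinal.mk_fintype, Fintype.card_fin, Cardinal.lift_natCast]
  exact stmt_8_aux m n hmn h

theorem stmt_8 (m n : ℕ) (hmn : m < n) (A B C : Type*)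
    (f : A ⊕ (Fin m × C) → B ⊕ (Fin n × C)) (hf : Function.Injective f) :
    ∃ g : A → B ⊕ (Fin (n - m) × C), Function.Injective g :=
  stmt_8_helper m n hmn A B C f hf
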